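/- Let g₁,…,gₘ ∈ ℝ[X₁,…,Xₙ] and K := {x ∈ ℝⁿ : gⱼ(x) ≥ 0, j = 1,…,m}. Assume the Archimedean assumption and Slater's condition hold, that for every j, ∇gⱼ(y) ≠ 0 whenever y ∈ K and gⱼ(y) = 0, and that the certificate of convexity holds with degree bounds 2d₁,…,2dₘ; set d := maxⱼ dⱼ. Then every polynomial f ∈ ℝ[X₁,…,Xₙ] of degree at most 1 that is nonnegative on K can be written f = Δ₀ + Σⱼ₌₁ᵐ Δⱼ·gⱼ with Δ₀, Δ₁,…,Δₘ SOS polynomials satisfying deg Δ₀ ≤ 2d and deg(Δⱼ·gⱼ) ≤ 2d for all j. -/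

import Mathlib

open MvPolynomial

/-- A polynomial is SOS if it is a finite sum of squares of polynomials. -/
def IsSOS {τ : Type*} (p : MvPolynomial τ ℝ) : Prop :=
  ∃ (k : ℕ) (q : Fin k → MvPolynomial τ ℝ), p = ∑ i, q i ^ 2

/-- A polynomial is SOS of degree at most `2d` if it is a finite sum of squares of
polynomials, each of degree at most `d`. -/
def IsSOSUpTo {τ : Type*} (d : ℕ) (p : MvPolynomial τ ℝ) : Prop :=
  ∃ (k : ℕ) (q : Fin k → MvPolynomial τ ℝ),
    (∀ i, (q i).totalDegree ≤ d) ∧ p = ∑ i, q i ^ 2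

/-- `g_k(X)`: the polynomial `g k` in the first group of variables of `ℝ[X,Y]`. -/
noncomputable def gXp {n m : ℕ} (g : Fin m → MvPolynomial (Fin n) ℝ) (k : Fin m) :
    MvPolynomial (Fin n ⊕ Fin n) ℝ := rename Sum.inl (g k)

/-- `g_k(Y)`: the polynomial `g k` in the second group of variables of `ℝ[X,Y]`. -/
noncomputable def gYp {n m : ℕ} (g : Fin m → MvPolynomial (Fin n) ℝ) (k : Fin m) :
    MvPolynomial (Fin n ⊕ Fin n) ℝ := rename Sum.inr (g k)

/-- The polynomial `⟨∇gⱼ(Y), X − Y⟩ = Σᵢ (∂gⱼ/∂Xᵢ)(Y)·(Xᵢ − Yᵢ) ∈ ℝ[X,Y]`. -/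
noncomputable def gradIP {n m : ℕ} (g : Fin m → MvPolynomial (Fin n) ℝ) (j : Fin m) :
    MvPolynomial (Fin n ⊕ Fin n) ℝ :=
  ∑ i, rename Sum.inr (pderiv i (g j)) * (X (Sum.inl i) - X (Sum.inr i))

/-- The certificate of convexity with degree bounds `2dⱼ`:
`⟨∇gⱼ(Y), X−Y⟩ = Σ_{k=0}^m σ_{jk}·g_k(X) + Σ_{k≠j} ψ_{jk}·g_k(Y) + ψⱼ·gⱼ(Y)` (`g₀ ≡ 1`)
with `σ_{jk}` and `ψ_{jk}` (`k ≠ j`) SOS, all products of degree at most `2dⱼ`. -/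
def CertificateOfConvexity {n m : ℕ} (g : Fin m → MvPolynomial (Fin n) ℝ)
    (dj : Fin m → ℕ) : Prop :=
  ∀ j : Fin m,
    ∃ (σ0 ψ0 : MvPolynomial (Fin n ⊕ Fin n) ℝ)
      (σ ψ : Fin m → MvPolynomial (Fin n ⊕ Fin n) ℝ)
      (ψj : MvPolynomial (Fin n ⊕ Fin n) ℝ),
      IsSOS σ0 ∧ IsSOS ψ0 ∧ (∀ k, IsSOS (σ k)) ∧ (∀ k, k ≠ j → IsSOS (ψ k)) ∧
      gradIP g j =
        σ0 + (∑ k, σ k * gXp g k) + ψ0 + (∑ k ∈ Finset.univ.erase j, ψ k * gYp g k)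
          + ψj * gYp g j ∧
      σ0.totalDegree ≤ 2 * dj j ∧ ψ0.totalDegree ≤ 2 * dj j ∧
      (∀ k, (σ k * gXp g k).totalDegree ≤ 2 * dj j) ∧
      (∀ k, k ≠ j → (ψ k * gYp g k).totalDegree ≤ 2 * dj j) ∧
      (ψj * gYp g j).totalDegree ≤ 2 * dj j



theorem IsSOS.eval_nonneg {τ : Type*} {p : MvPolynomial τ ℝ} (h : IsSOS p) (x : τ → ℝ) :
    0 ≤ eval x p := by
  obtain ⟨k, q, rfl⟩ := h
  simp only [map_sum, map_pow]
  exact Finset.sum_nonneg fun i _ => sq_nonneg _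

theorem IsSOS_zero {τ : Type*} : IsSOS (0 : MvPolynomial τ ℝ) := ⟨0, ![], by simp⟩

theorem IsSOS.add {τ : Type*} {p q : MvPolynomial τ ℝ} (hp : IsSOS p) (hq : IsSOS q) :
    IsSOS (p + q) := by
  obtain ⟨k1, f1, rfl⟩ := hp
  obtain ⟨k2, f2, rfl⟩ := hq
  exact ⟨k1 + k2, Fin.append f1 f2, by
    rw [Fin.sum_univ_add]
    simp [Fin.append_left, Fin.append_right]⟩

theorem IsSOS_C {r : ℝ} (hr : 0 ≤ r) {τ : Type*} : IsSOS (C r : MvPolynomial τ ℝ) :=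
  ⟨1, ![C (Real.sqrt r)], by simp [← map_pow, Real.sq_sqrt hr]⟩

theorem IsSOS.smul {τ : Type*} {t : ℝ} (ht : 0 ≤ t) {p : MvPolynomial τ ℝ} (hp : IsSOS p) :
    IsSOS (t • p) := by
  obtain ⟨k, q, rfl⟩ := hp
  refine ⟨k, fun i => C (Real.sqrt t) * q i, ?_⟩
  rw [Finset.smul_sum]
  congr 1; ext i
  rw [mul_pow, ← map_pow, Real.sq_sqrt ht, smul_eq_C_mul]

theorem IsSOS.mapAlg {τ τ' : Type*} {p : MvPolynomial τ ℝ}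
    (φ : MvPolynomial τ ℝ →ₐ[ℝ] MvPolynomial τ' ℝ) (hp : IsSOS p) : IsSOS (φ p) := by
  obtain ⟨k, q, rfl⟩ := hp
  exact ⟨k, fun i => φ (q i), by simp⟩

theorem IsSOS.finsetSum {τ ι : Type*} (s : Finset ι) (f : ι → MvPolynomial τ ℝ)
    (h : ∀ i ∈ s, IsSOS (f i)) : IsSOS (∑ i ∈ s, f i) := by
  classical
  induction s using Finset.induction_on with
  | empty => simpa using IsSOS_zero
  | insert x s hx ih =>
    rw [Finset.sum_insert hx]
    exact (h _ (Finset.mem_insert_self _ _)).add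
      (ih fun i hi => h i (Finset.mem_insert_of_mem hi))

theorem totalDegree_aeval_le {τ τ' : Type*} (F : τ → MvPolynomial τ' ℝ)
    (hF : ∀ v, (F v).totalDegree ≤ 1) (p : MvPolynomial τ ℝ) :
    (aeval F p).totalDegree ≤ p.totalDegree := by
  classical
  conv_lhs => rw [p.as_sum]
  rw [map_sum]
  refine (totalDegree_finset_sum _ _).trans ?_
  refine Finset.sup_le fun d hd => ?_
  rw [aeval_monomial]
  refine (totalDegree_mul _ _).trans ?_
  have h1 : (algebraMap ℝ (MvPolynomial τ' ℝ) (coeff d p)).totalDegree = 0 := totalDegree_C _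
  rw [h1, zero_add]
  refine le_trans ?_ (le_totalDegree hd)
  rw [Finsupp.prod, Finsupp.sum]
  refine (totalDegree_finset_prod _ _).trans ?_
  refine Finset.sum_le_sum fun v _ => ?_
  refine (totalDegree_pow _ _).trans ?_
  calc d v * (F v).totalDegree ≤ d v * 1 := Nat.mul_le_mul_left _ (hF v)
    _ = d v := Nat.mul_one _

lemma deg_le_one_mono {n : ℕ} (d : Fin n →₀ ℕ) (hd : (d.sum fun _ e => e) ≤ 1) :
    d = 0 ∨ ∃ i, d = Finsupp.single i 1 := by
  rcases eq_or_ne d 0 with h | h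
  · exact Or.inl h
  right
  obtain ⟨i, hi⟩ := Finsupp.support_nonempty_iff.2 h
  have hsum : ∑ j ∈ d.support, d j ≤ 1 := hd
  have h1 : 1 ≤ d i := Nat.one_le_iff_ne_zero.2 (Finsupp.mem_support_iff.1 hi)
  have h2 : d i ≤ ∑ j ∈ d.support, d j :=
    Finset.single_le_sum (fun _ _ => Nat.zero_le _) hi
  have hdi : d i = 1 := le_antisymm (h2.trans hsum) h1
  refine ⟨i, Finsupp.eq_single_iff.2 ⟨fun j hj => ?_, hdi⟩⟩
  by_contra hji
  have hji' : j ≠ i := by simpa using hji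
  have h3 : 1 ≤ d j := Nat.one_le_iff_ne_zero.2 (Finsupp.mem_support_iff.1 hj)
  have h4 : d j + d i ≤ ∑ k ∈ d.support, d k := by
    have hsub : ({j, i} : Finset (Fin n)) ⊆ d.support := by
      intro k hk
      simp only [Finset.mem_insert, Finset.mem_singleton] at hk
      rcases hk with rfl | rfl
      · exact hj
      · exact hi
    calc d j + d i = ∑ k ∈ ({j, i} : Finset (Fin n)), d k := (Finset.sum_pair hji').symm
      _ ≤ ∑ k ∈ d.support, d k := Finset.sum_le_sum_of_subset hsub
  omega

theorem deg_le_one_structure {n : ℕ} (f : MvPolynomial (Fin n) ℝ) (hf : f.totalDegree ≤ 1) :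
    f = C (coeff 0 f) + ∑ i, C (coeff (Finsupp.single i 1) f) * X i := by
  ext d
  rw [coeff_add, coeff_C, coeff_sum]
  simp only [coeff_C_mul, coeff_X']
  by_cases hd : coeff d f = 0
  · rw [hd]
    rcases eq_or_ne d 0 with rfl | h0
    · simp only [if_pos rfl]
      have : ∀ i : Fin n, ¬ (Finsupp.single i 1 = (0 : Fin n →₀ ℕ)) := by
        intro i h
        simpa using Finsupp.single_eq_zero.1 h
      rw [Finset.sum_congr rfl (fun i _ => by rw [if_neg (this i), mul_zero])]
      · simp at hd ⊢; exact hd.symm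
    · rcases Classical.em (∃ i, Finsupp.single i 1 = d) with ⟨i, hi⟩ | hne
      · subst hi
        rw [if_neg (Ne.symm h0)]
        rw [Finset.sum_eq_single i (fun j _ hj => by
            rw [if_neg, mul_zero]
            exact fun hjd => hj ((Finsupp.single_left_injective one_ne_zero) hjd)) (by simp)]
        rw [if_pos rfl, mul_one, hd, zero_add]
      · push_neg at hne
        rw [if_neg (Ne.symm h0)]
        rw [Finset.sum_congr rfl (fun i _ => by rw [if_neg (hne i), mul_zero])]
        simp
  · have hds : d ∈ f.support := Finsupp.mem_support_iff.2 hd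
    have : (d.sum fun _ e => e) ≤ 1 := (le_totalDegree hds).trans hf
    rcases deg_le_one_mono d this with rfl | ⟨i, rfl⟩
    · simp only [if_pos rfl]
      have : ∀ i : Fin n, ¬ (Finsupp.single i 1 = (0 : Fin n →₀ ℕ)) := by
        intro i h
        simpa using Finsupp.single_eq_zero.1 h
      rw [Finset.sum_congr rfl (fun i _ => by rw [if_neg (this i), mul_zero])]
      simp
    · have h0 : Finsupp.single i 1 ≠ 0 := by
        intro h; simpa using Finsupp.single_eq_zero.1 h
      rw [if_neg (Ne.symm h0)]
      rw [Finset.sum_eq_single i (fun j _ hj => by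
          rw [if_neg, mul_zero]
          exact fun hjd => hj ((Finsupp.single_left_injective one_ne_zero) hjd)) (by simp)]
      rw [if_pos rfl, mul_one]
      simp

theorem hasDerivAt_eval_line {n : ℕ} (p : MvPolynomial (Fin n) ℝ) (y u : Fin n → ℝ) (t : ℝ) :
    HasDerivAt (fun s : ℝ => eval (fun i => y i + s * u i) p)
      (∑ i, u i * eval (fun i => y i + t * u i) (pderiv i p)) t := by
  induction p using MvPolynomial.induction_on with
  | C a =>
    simp only [eval_C, pderiv_C, map_zero, mul_zero, Finset.sum_const_zero]
    exact hasDerivAt_const t a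
  | add p q hp hq =>
    simp only [map_add, mul_add, Finset.sum_add_distrib]
    exact hp.add hq
  | mul_X p i hp =>
    have hX : HasDerivAt (fun s : ℝ => y i + s * u i) (u i) t := by
      simpa using ((hasDerivAt_id t).mul_const (u i)).const_add (y i)
    have := hp.fun_mul hX
    simp only [map_mul, eval_X] at this ⊢
    refine this.congr_deriv (Eq.symm ?_)
    classical
    simp only [pderiv_mul, map_add, map_mul, eval_X, pderiv_X]
    have he : ∀ x : Fin n,
        (eval fun i => y i + t * u i) (Pi.single (M := fun _ => MvPolynomial (Fin n) ℝ) x 1 i)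
          = if x = i then 1 else 0 := by
      intro x
      rcases eq_or_ne x i with rfl | h
      · simp
      · simp [Pi.single_apply, h]
    simp only [he]
    rw [Finset.sum_congr rfl (fun x _ => show
      u x * ((eval fun i => y i + t * u i) ((pderiv x) p) * (y i + t * u i)
        + (eval fun i => y i + t * u i) p * (if x = i then 1 else 0))
      = u x * (eval fun i => y i + t * u i) ((pderiv x) p) * (y i + t * u i)
        + (if x = i then (eval fun i => y i + t * u i) p * u x else 0) from by
          split_ifs <;> ring)]
    rw [Finset.sum_add_distrib, Finset.sum_ite_eq' Finset.univ i, if_pos (Finset.mem_univ i),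
      ← Finset.sum_mul]

variable {n m : ℕ}

/-- The finitely generated cone. -/
def coneOf (a : Fin m → (Fin n → ℝ)) : Set (Fin n → ℝ) :=
  {x | ∃ lam : Fin m → ℝ, (∀ j, 0 ≤ lam j) ∧ x = ∑ j, lam j • a j}

lemma cone_cara (a : Fin m → (Fin n → ℝ)) (S : Finset (Fin m)) :
    ∀ lam : Fin m → ℝ, (∀ j, 0 ≤ lam j) → (∀ j ∉ S, lam j = 0) →
    ∃ T : Finset (Fin m), LinearIndependent ℝ (fun j : T => a j) ∧
      ∃ mu : Fin m → ℝ, (∀ j, 0 ≤ mu j) ∧ (∀ j ∉ T, mu j = 0) ∧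
        ∑ j, mu j • a j = ∑ j, lam j • a j := by
  classical
  induction S using Finset.strongInduction with
  | _ S ih =>
  intro lam hlam hsupp
  by_cases hind : LinearIndependent ℝ (fun j : S => a j)
  · exact ⟨S, hind, lam, hlam, hsupp, rfl⟩
  rw [Fintype.not_linearIndependent_iff] at hind
  obtain ⟨g, hg0, j1, hj1⟩ := hind
  set mu : Fin m → ℝ := fun j => if h : j ∈ S then g ⟨j, h⟩ else 0 with hmu
  have hmusupp : ∀ j ∉ S, mu j = 0 := fun j hj => by simp [hmu, hj]
  have hmusum : ∑ j, mu j • a j = 0 := by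
    rw [← Finset.sum_subset (Finset.subset_univ S)
      (fun j _ hj => by rw [hmusupp j hj, zero_smul])]
    rw [← Finset.sum_attach S (fun j => mu j • a j)]
    simpa [hmu] using hg0
  have key : ∀ nu : Fin m → ℝ, (∀ j ∉ S, nu j = 0) → (∑ j, nu j • a j = 0) →
      (∃ j, 0 < nu j) →
      ∃ T : Finset (Fin m), LinearIndependent ℝ (fun j : T => a j) ∧
        ∃ mu' : Fin m → ℝ, (∀ j, 0 ≤ mu' j) ∧ (∀ j ∉ T, mu' j = 0) ∧
          ∑ j, mu' j • a j = ∑ j, lam j • a j := by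
    intro nu hnusupp hnusum ⟨jp, hjp⟩
    set P : Finset (Fin m) := S.filter (fun j => 0 < nu j) with hP
    have hPne : P.Nonempty := by
      refine ⟨jp, Finset.mem_filter.2 ⟨?_, hjp⟩⟩
      by_contra hjpS
      rw [hnusupp jp hjpS] at hjp
      exact lt_irrefl _ hjp
    obtain ⟨j0, hj0P, hj0min⟩ := P.exists_min_image (fun j => lam j / nu j) hPne
    have hj0S : j0 ∈ S := (Finset.mem_filter.1 hj0P).1
    have hnuj0 : 0 < nu j0 := (Finset.mem_filter.1 hj0P).2
    set t := lam j0 / nu j0 with ht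
    have hts : 0 ≤ t := div_nonneg (hlam j0) hnuj0.le
    set lam' : Fin m → ℝ := fun j => lam j - t * nu j with hlam'
    have hlam'nonneg : ∀ j, 0 ≤ lam' j := by
      intro j
      by_cases hjP : j ∈ P
      · have hnuj : 0 < nu j := (Finset.mem_filter.1 hjP).2
        have := hj0min j hjP
        rw [ht, div_le_div_iff₀ hnuj0 hnuj] at this
        simp only [hlam']
        rw [sub_nonneg, ht, div_mul_eq_mul_div, div_le_iff₀ hnuj0]
        linarith [this]
      · have hnuj : nu j ≤ 0 := by
          by_cases hjS : j ∈ S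
          · by_contra hpos
            exact hjP (Finset.mem_filter.2 ⟨hjS, lt_of_not_ge hpos⟩)
          · rw [hnusupp j hjS]
        have : t * nu j ≤ 0 := mul_nonpos_of_nonneg_of_nonpos hts hnuj
        simp only [hlam']
        linarith [hlam j]
    have hlam'supp : ∀ j ∉ S.erase j0, lam' j = 0 := by
      intro j hj
      rcases eq_or_ne j j0 with rfl | hne
      · simp only [hlam', ht]
        field_simp
        ring
      · have hjS : j ∉ S := fun hjS => hj (Finset.mem_erase.2 ⟨hne, hjS⟩)
        simp only [hlam', hsupp j hjS, hnusupp j hjS, mul_zero, sub_zero]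
    have hsum' : ∑ j, lam' j • a j = ∑ j, lam j • a j := by
      simp only [hlam', sub_smul, Finset.sum_sub_distrib, mul_smul]
      rw [← Finset.smul_sum, hnusum, smul_zero, sub_zero]
    obtain ⟨T, hT, mu', h1, h2, h3⟩ :=
      ih (S.erase j0) (Finset.erase_ssubset hj0S) lam' hlam'nonneg hlam'supp
    exact ⟨T, hT, mu', h1, h2, h3.trans hsum'⟩
  by_cases hpos : ∃ j, 0 < mu j
  · exact key mu hmusupp hmusum hpos
  · push_neg at hpos
    refine key (fun j => -mu j) (fun j hj => by simp [hmusupp j hj])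
      (by simp only [neg_smul, Finset.sum_neg_distrib, hmusum, neg_zero]) ?_
    have hj1' : mu j1 ≠ 0 := by
      simp only [hmu]
      rw [dif_pos j1.2]
      simpa using hj1
    exact ⟨j1, by simpa using lt_of_le_of_ne (hpos j1) hj1'⟩

lemma coneOf_isClosed (a : Fin m → (Fin n → ℝ)) : IsClosed (coneOf a) := by
  classical
  have heq : coneOf a =
      ⋃ T ∈ {T : Finset (Fin m) | LinearIndependent ℝ (fun j : T => a j)},
        {x : Fin n → ℝ | ∃ mu : Fin m → ℝ, (∀ j, 0 ≤ mu j) ∧ (∀ j ∉ T, mu j = 0) ∧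
          x = ∑ j, mu j • a j} := by
    ext x
    simp only [Set.mem_iUnion, Set.mem_setOf_eq, coneOf]
    constructor
    · rintro ⟨lam, hlam, rfl⟩
      obtain ⟨T, hT, mu, h1, h2, h3⟩ :=
        cone_cara a Finset.univ lam hlam (fun j hj => absurd (Finset.mem_univ j) hj)
      exact ⟨T, hT, mu, h1, h2, h3.symm⟩
    · rintro ⟨T, _, mu, h1, _, rfl⟩
      exact ⟨mu, h1, rfl⟩
  rw [heq]
  refine Set.Finite.isClosed_biUnion (Set.toFinite _) fun T hT => ?_
  -- the linear map from coefficients supported on `T`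
  set L : (T → ℝ) →ₗ[ℝ] (Fin n → ℝ) :=
    { toFun := fun mu => ∑ j : T, mu j • a j
      map_add' := fun mu nu => by
        simp only [Pi.add_apply, add_smul, Finset.sum_add_distrib]
      map_smul' := fun c mu => by
        simp only [Pi.smul_apply, smul_eq_mul, mul_smul, RingHom.id_apply, ← Finset.smul_sum] }
    with hL
  have hker : LinearMap.ker L = ⊥ := by
    rw [Submodule.eq_bot_iff]
    intro mu hmu
    have := Fintype.linearIndependent_iff.1 hT mu (by simpa [hL] using hmu)
    funext j
    exact this j
  have hemb := LinearMap.isClosedEmbedding_of_injective (𝕜 := ℝ) hker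
  have himg : {x : Fin n → ℝ | ∃ mu : Fin m → ℝ, (∀ j, 0 ≤ mu j) ∧ (∀ j ∉ T, mu j = 0) ∧
      x = ∑ j, mu j • a j} = L '' {mu : T → ℝ | ∀ j, 0 ≤ mu j} := by
    ext x
    simp only [Set.mem_image, Set.mem_setOf_eq]
    constructor
    · rintro ⟨mu, h1, h2, rfl⟩
      refine ⟨fun j => mu j, fun j => h1 j, ?_⟩
      simp only [hL, LinearMap.coe_mk, AddHom.coe_mk]
      rw [← Finset.sum_subset (Finset.subset_univ T)
        (fun j _ hj => by rw [h2 j hj, zero_smul])]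
      exact Finset.sum_coe_sort T (fun j => mu j • a j)
    · rintro ⟨mu, hmu, rfl⟩
      refine ⟨fun j => if h : j ∈ T then mu ⟨j, h⟩ else 0,
        fun j => by by_cases h : j ∈ T <;> simp [h, hmu], fun j hj => by simp [hj], ?_⟩
      simp only [hL, LinearMap.coe_mk, AddHom.coe_mk]
      rw [← Finset.sum_subset (Finset.subset_univ T)
        (fun j _ hj => by simp [hj])]
      rw [← Finset.sum_attach T fun j => (if h : j ∈ T then mu ⟨j, h⟩ else 0) • a j]
      exact Finset.sum_congr rfl fun j _ => by simp [j.2]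
  rw [himg]
  refine hemb.isClosedMap _ ?_
  have : {mu : T → ℝ | ∀ j, 0 ≤ mu j} = ⋂ j : T, {mu : T → ℝ | 0 ≤ mu j} := by
    ext mu; simp
  rw [this]
  exact isClosed_iInter fun j => isClosed_le continuous_const (continuous_apply j)

lemma coneOf_convex (a : Fin m → (Fin n → ℝ)) : Convex ℝ (coneOf a) := by
  rintro x ⟨lam, hlam, rfl⟩ y ⟨mu, hmu, rfl⟩ s t hs ht _
  refine ⟨fun j => s * lam j + t * mu j,
    fun j => add_nonneg (mul_nonneg hs (hlam j)) (mul_nonneg ht (hmu j)), ?_⟩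
  simp only [add_smul, mul_smul, Finset.sum_add_distrib, Finset.smul_sum]

theorem farkas (a : Fin m → (Fin n → ℝ)) (c : Fin n → ℝ)
    (h : ∀ v : Fin n → ℝ, (∀ j, 0 ≤ ∑ i, a j i * v i) → 0 ≤ ∑ i, c i * v i) :
    ∃ lam : Fin m → ℝ, (∀ j, 0 ≤ lam j) ∧ c = ∑ j, lam j • a j := by
  by_contra hc
  have hcnot : c ∉ coneOf a := fun ⟨lam, h1, h2⟩ => hc ⟨lam, h1, h2⟩
  obtain ⟨φ, u, hφc, hφC⟩ :=
    geometric_hahn_banach_point_closed (coneOf_convex a) (coneOf_isClosed a) hcnot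
  have h0mem : (0 : Fin n → ℝ) ∈ coneOf a :=
    ⟨fun _ => 0, fun _ => le_refl _, by simp⟩
  have hu0 : u < 0 := by simpa using hφC 0 h0mem
  have hφnonneg : ∀ x ∈ coneOf a, 0 ≤ φ x := by
    intro x hx
    by_contra hneg
    push_neg at hneg
    -- scale x
    obtain ⟨lam, hlam, rfl⟩ := hx
    set s : ℝ := (u - 1) / φ (∑ j, lam j • a j) with hs
    have hsp : 0 < s := div_pos_of_neg_of_neg (by linarith) hneg
    have hmem : s • (∑ j, lam j • a j) ∈ coneOf a := by
      refine ⟨fun j => s * lam j, fun j => mul_nonneg hsp.le (hlam j), ?_⟩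
      simp only [mul_smul, Finset.smul_sum]
    have := hφC _ hmem
    rw [map_smul, smul_eq_mul, hs, div_mul_cancel₀ _ (ne_of_lt hneg)] at this
    linarith
  have haj : ∀ j, 0 ≤ φ (a j) := by
    intro j
    refine hφnonneg (a j) ⟨fun k => if k = j then 1 else 0, fun k => by positivity, ?_⟩
    simp [ite_smul, Finset.sum_ite_eq']
  -- express φ via its values on basis vectors
  set v : Fin n → ℝ := fun i => φ (Pi.single i 1) with hv
  have hφeq : ∀ w : Fin n → ℝ, φ w = ∑ i, w i * v i := by
    intro w
    have hw : w = ∑ i, w i • (Pi.single i 1 : Fin n → ℝ) := by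
      funext k
      rw [Finset.sum_apply]
      rw [Finset.sum_eq_single k (fun i _ hi => by simp [Pi.single_apply, Ne.symm hi]) (by simp)]
      simp
    conv_lhs => rw [hw]
    rw [map_sum]
    exact Finset.sum_congr rfl fun i _ => by rw [map_smul, smul_eq_mul, hv]
  have hfar := h v (fun j => by rw [← hφeq (a j)]; exact haj j)
  rw [← hφeq c] at hfar
  linarith


lemma aeval_C_eval {n : ℕ} (y : Fin n → ℝ) (p : MvPolynomial (Fin n) ℝ) :
    aeval (fun i => C (y i) : Fin n → MvPolynomial (Fin n) ℝ) p = C (eval y p) := by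
  have h := eval₂_comp_left (C : ℝ →+* MvPolynomial (Fin n) ℝ) (RingHom.id ℝ) y p
  rw [RingHom.comp_id] at h
  rw [aeval_def, algebraMap_eq]
  exact (h.symm.trans (by rfl)).symm |>.trans (by rfl) |>.symm

section
variable {n m : ℕ} (g : Fin m → MvPolynomial (Fin n) ℝ) (y : Fin n → ℝ)

noncomputable def phiY : MvPolynomial (Fin n ⊕ Fin n) ℝ →ₐ[ℝ] MvPolynomial (Fin n) ℝ :=
  aeval (Sum.elim X (fun i => C (y i)))

lemma phiY_gXp (k : Fin m) : phiY y (gXp g k) = g k := by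
  rw [phiY, gXp, aeval_rename, Sum.elim_comp_inl, aeval_X_left_apply]

lemma phiY_gYp (k : Fin m) : phiY y (gYp g k) = C (eval y (g k)) := by
  rw [phiY, gYp, aeval_rename, Sum.elim_comp_inr, aeval_C_eval]

lemma phiY_gradIP (j : Fin m) :
    phiY y (gradIP g j) = ∑ i, C (eval y (pderiv i (g j))) * (X i - C (y i)) := by
  rw [gradIP, map_sum]
  refine Finset.sum_congr rfl fun i _ => ?_
  rw [map_mul, map_sub, phiY, aeval_rename, Sum.elim_comp_inr, aeval_C_eval, aeval_X, aeval_X]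
  simp

lemma eval_elim_gXp (x : Fin n → ℝ) (k : Fin m) :
    eval (Sum.elim x y) (gXp g k) = eval x (g k) := by
  rw [gXp, eval_rename, Sum.elim_comp_inl]

lemma eval_elim_gYp (x : Fin n → ℝ) (k : Fin m) :
    eval (Sum.elim x y) (gYp g k) = eval y (g k) := by
  rw [gYp, eval_rename, Sum.elim_comp_inr]

lemma eval_elim_gradIP (x : Fin n → ℝ) (j : Fin m) :
    eval (Sum.elim x y) (gradIP g j) =
      ∑ i, eval y (pderiv i (g j)) * (x i - y i) := by
  rw [gradIP, map_sum]
  refine Finset.sum_congr rfl fun i _ => ?_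
  rw [map_mul, map_sub, eval_rename, Sum.elim_comp_inr, eval_X, eval_X]
  simp

end

lemma phiY_deg {n : ℕ} (y : Fin n → ℝ) (p : MvPolynomial (Fin n ⊕ Fin n) ℝ) :
    (phiY y p).totalDegree ≤ p.totalDegree := by
  refine totalDegree_aeval_le _ (fun v => ?_) p
  cases v with
  | inl i => simpa using (totalDegree_X i).le
  | inr i => simp [totalDegree_C]

set_option maxHeartbeats 1000000 in
/-- under the Archimedean assumption, Slater's condition, the boundary
nondegeneracy, and the certificate of convexity with degree bounds `2d₁,…,2dₘ`
(`d := maxⱼ dⱼ`), every polynomial of degree at most 1 nonnegative on `K` has a Putinar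
representation `f = Δ₀ + Σⱼ Δⱼ·gⱼ` with `Δⱼ` SOS, `deg Δ₀ ≤ 2d`, `deg(Δⱼ·gⱼ) ≤ 2d`. -/
theorem stmt_17 (n m : ℕ) (g : Fin m → MvPolynomial (Fin n) ℝ)
    (K : Set (Fin n → ℝ)) (hK : K = {x | ∀ j, 0 ≤ eval x (g j)})
    (hcompact : IsCompact K)
    (harch : ∃ (M : ℝ) (σ₀ : MvPolynomial (Fin n) ℝ) (σ : Fin m → MvPolynomial (Fin n) ℝ),
      IsSOS σ₀ ∧ (∀ j, IsSOS (σ j)) ∧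
      C M - ∑ i, X i ^ 2 = σ₀ + ∑ j, σ j * g j)
    (slater : ∃ x₀ : Fin n → ℝ, ∀ j, 0 < eval x₀ (g j))
    (hnd : ∀ j : Fin m, ∀ y ∈ K, eval y (g j) = 0 →
      (fun i => eval y (pderiv i (g j))) ≠ (0 : Fin n → ℝ))
    (dj : Fin m → ℕ) (hcert : CertificateOfConvexity g dj)
    (d : ℕ) (hd : d = Finset.univ.sup dj) :
    ∀ f : MvPolynomial (Fin n) ℝ, f.totalDegree ≤ 1 → (∀ x ∈ K, 0 ≤ eval x f) →
      ∃ (Δ0 : MvPolynomial (Fin n) ℝ) (Δ : Fin m → MvPolynomial (Fin n) ℝ),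
        IsSOS Δ0 ∧ (∀ j, IsSOS (Δ j)) ∧ Δ0.totalDegree ≤ 2 * d ∧
        (∀ j, (Δ j * g j).totalDegree ≤ 2 * d) ∧
        f = Δ0 + ∑ j, Δ j * g j := by
  classical
  intro f hfdeg hfnn
  obtain ⟨x₀, hx₀⟩ := slater
  have hgK : ∀ x ∈ K, ∀ j, 0 ≤ eval x (g j) := fun x hx => by rw [hK] at hx; exact hx
  have hx₀K : x₀ ∈ K := by rw [hK]; exact fun j => (hx₀ j).le
  have hcont : ∀ p : MvPolynomial (Fin n) ℝ, Continuous fun x : Fin n → ℝ => eval x p :=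
    fun p => MvPolynomial.continuous_eval p
  obtain ⟨y, hyK, hymin⟩ := hcompact.exists_isMinOn ⟨x₀, hx₀K⟩ ((hcont f).continuousOn)
  set c : Fin n → ℝ := fun i => coeff (Finsupp.single i 1) f with hcdef
  set a : Fin m → Fin n → ℝ := fun j i => eval y (pderiv i (g j)) with hadef
  have hdjd : ∀ j, 2 * dj j ≤ 2 * d := fun j => by
    rw [hd]; exact Nat.mul_le_mul_left 2 (Finset.le_sup (Finset.mem_univ j))
  -- the evaluation formula for `f`
  have h0f : eval y f = coeff 0 f + ∑ i, c i * y i := by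
    conv_lhs => rw [deg_le_one_structure f hfdeg]
    simp [hcdef]
  have hfeval : ∀ x : Fin n → ℝ, eval x f = eval y f + ∑ i, c i * (x i - y i) := by
    intro x
    conv_lhs => rw [deg_le_one_structure f hfdeg]
    rw [h0f]
    simp only [map_add, map_sum, map_mul, eval_C, eval_X, mul_sub]
    rw [Finset.sum_sub_distrib]
    ring
  -- choose the certificate data
  choose σ0 ψ0 σ ψ ψjj hσ0 hψ0 hσ hψ hident hdσ0 hdψ0 hdσ hdψ hdψjj using hcert
  -- the basic linearization inequality for active constraints
  have hineq : ∀ j : Fin m, eval y (g j) = 0 → ∀ x ∈ K, 0 ≤ ∑ i, a j i * (x i - y i) := by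
    intro j hj x hx
    have hid := congrArg (eval (Sum.elim x y)) (hident j)
    rw [eval_elim_gradIP] at hid
    simp only [map_add, map_sum, map_mul] at hid
    rw [hid]
    have t5 : eval (Sum.elim x y) (ψjj j) * eval (Sum.elim x y) (gYp g j) = 0 := by
      rw [eval_elim_gYp, hj, mul_zero]
    rw [t5, add_zero]
    refine add_nonneg (add_nonneg (add_nonneg ((hσ0 j).eval_nonneg _) ?_) ((hψ0 j).eval_nonneg _)) ?_
    · refine Finset.sum_nonneg fun k _ => ?_
      rw [eval_elim_gXp]
      exact mul_nonneg ((hσ j k).eval_nonneg _) (hgK x hx k)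
    · refine Finset.sum_nonneg fun k hk => ?_
      rw [eval_elim_gYp]
      exact mul_nonneg ((hψ j k (Finset.mem_erase.1 hk).1).eval_nonneg _) (hgK y hyK k)
  -- a ball around the Slater point is contained in K
  have hball : ∃ ε > (0:ℝ), ∀ x : Fin n → ℝ, dist x x₀ < ε → x ∈ K := by
    have hU : IsOpen (⋂ j, {x : Fin n → ℝ | 0 < eval x (g j)}) :=
      isOpen_iInter_of_finite fun j => isOpen_lt continuous_const (hcont (g j))
    have hx₀U : x₀ ∈ ⋂ j, {x : Fin n → ℝ | 0 < eval x (g j)} := Set.mem_iInter.2 hx₀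
    obtain ⟨ε, hε, hsub⟩ := Metric.isOpen_iff.1 hU x₀ hx₀U
    refine ⟨ε, hε, fun x hx => ?_⟩
    rw [hK]
    exact fun j => le_of_lt (Set.mem_iInter.1 (hsub (Metric.mem_ball.2 hx)) j)
  -- the Slater direction is strictly feasible for every active constraint
  have hstrict : ∀ j : Fin m, eval y (g j) = 0 → 0 < ∑ i, a j i * (x₀ i - y i) := by
    intro j hj
    have hge := hineq j hj x₀ hx₀K
    rcases eq_or_lt_of_le hge with heq | hlt
    swap
    · exact hlt
    exfalso
    obtain ⟨ε, hε, hballK⟩ := hball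
    have hizero : ∀ i, a j i = 0 := by
      intro i
      have key : ∀ s : ℝ, |s| = 1 → 0 ≤ s * a j i := by
        intro s hs
        set x : Fin n → ℝ := fun i' => x₀ i' + (ε/2) * (if i' = i then s else 0) with hxdef
        have hxK : x ∈ K := by
          refine hballK x ?_
          rw [dist_pi_lt_iff hε]
          intro k
          simp only [hxdef]
          rcases eq_or_ne k i with rfl | hk
          · rw [if_pos rfl, Real.dist_eq]
            have : x₀ k + ε / 2 * s - x₀ k = ε/2 * s := by ring
            rw [this, abs_mul, hs, mul_one, abs_of_pos (by linarith)]
            linarith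
          · rw [if_neg hk, Real.dist_eq]
            simpa using hε
        have h2 := hineq j hj x hxK
        have hexp : ∑ i', a j i' * (x i' - y i')
            = (∑ i', a j i' * (x₀ i' - y i')) + (ε/2) * (s * a j i) := by
          rw [Finset.sum_congr rfl (fun i' _ => show
            a j i' * (x i' - y i') = a j i' * (x₀ i' - y i')
              + (if i' = i then (ε/2) * (s * a j i') else 0) from by
            simp only [hxdef]
            split_ifs <;> ring)]
          rw [Finset.sum_add_distrib, Finset.sum_ite_eq' Finset.univ i, if_pos (Finset.mem_univ i)]
        rw [hexp, ← heq, zero_add] at h2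
        nlinarith
      have hp1 := key 1 (by norm_num)
      have hm1 := key (-1) (by norm_num)
      nlinarith
    exact hnd j y hyK hj (funext fun i => hizero i)
  -- first-order optimality
  have hco : ∀ u : Fin n → ℝ, (∀ j, eval y (g j) = 0 → 0 < ∑ i, a j i * u i) →
      0 ≤ ∑ i, c i * u i := by
    intro u hu
    have hev : ∀ j, ∀ᶠ t in nhdsWithin (0:ℝ) (Set.Ioi 0),
        0 ≤ eval (fun i => y i + t * u i) (g j) := by
      intro j
      by_cases hj : eval y (g j) = 0
      · have hder := hasDerivAt_eval_line (g j) y u 0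
        have h0pt : (fun i => y i + 0 * u i) = y := funext fun i => by ring
        rw [h0pt] at hder
        have hD : 0 < ∑ i, u i * eval y (pderiv i (g j)) := by
          have := hu j hj
          rw [Finset.sum_congr rfl fun i _ => mul_comm (a j i) (u i)] at this
          exact this
        have hslope := hasDerivAt_iff_tendsto_slope.1 hder
        have hpos := hslope.eventually (eventually_gt_nhds hD)
        have hmono : nhdsWithin (0:ℝ) (Set.Ioi 0) ≤ nhdsWithin (0:ℝ) {(0:ℝ)}ᶜ :=
          nhdsWithin_mono _ (fun t ht => ne_of_gt ht)
        filter_upwards [hmono hpos, self_mem_nhdsWithin] with t hslopet htpos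
        have hne : (t:ℝ) ≠ 0 := ne_of_gt htpos
        rw [slope_def_field] at hslopet
        have hval0 : eval (fun i => y i + 0 * u i) (g j) = 0 := by rw [h0pt]; exact hj
        rw [h0pt] at hslopet
        rw [hj, sub_zero, sub_zero] at hslopet
        have := mul_pos hslopet htpos
        rw [div_mul_cancel₀ _ hne] at this
        exact this.le
      · have hj' : 0 < eval y (g j) := lt_of_le_of_ne (hgK y hyK j) (Ne.symm hj)
        have hpath : Continuous fun t : ℝ => (fun i => y i + t * u i) :=
          continuous_pi fun i => continuous_const.add (continuous_id.mul continuous_const)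
        have hcontt : ContinuousAt (fun t : ℝ => eval (fun i => y i + t * u i) (g j)) 0 :=
          ((hcont (g j)).comp hpath).continuousAt
        have h0pt : (fun i => y i + (0:ℝ) * u i) = y := funext fun i => by ring
        have hval : (fun t : ℝ => eval (fun i => y i + t * u i) (g j)) 0 = eval y (g j) := by
          simp only [h0pt]
        have hev' : ∀ᶠ t in nhds (0:ℝ), 0 < eval (fun i => y i + t * u i) (g j) := by
          refine continuousAt_const.eventually_lt hcontt ?_
          rw [h0pt]
          exact hj'

        exact (hev'.filter_mono nhdsWithin_le_nhds).mono fun t ht => ht.le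
    have hallev : ∀ᶠ t in nhdsWithin (0:ℝ) (Set.Ioi 0),
        (∀ j, 0 ≤ eval (fun i => y i + t * u i) (g j)) := by
      rw [Filter.eventually_all]
      exact hev
    obtain ⟨t, htK, htpos⟩ := (hallev.and self_mem_nhdsWithin).exists
    have hmemK : (fun i => y i + t * u i) ∈ K := by rw [hK]; exact htK
    have hmin := isMinOn_iff.1 hymin _ hmemK
    rw [hfeval (fun i => y i + t * u i)] at hmin
    have hsum : ∑ i, c i * ((y i + t * u i) - y i) = t * ∑ i, c i * u i := by
      rw [Finset.mul_sum]
      exact Finset.sum_congr rfl fun i _ => by ring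
    rw [hsum] at hmin
    have h0le : 0 ≤ t * ∑ i, c i * u i := by linarith
    exact nonneg_of_mul_nonneg_right h0le htpos
  -- Farkas lemma
  set a' : Fin m → Fin n → ℝ := fun j => if eval y (g j) = 0 then a j else 0 with ha'def
  have hdual : ∀ v : Fin n → ℝ, (∀ j, 0 ≤ ∑ i, a' j i * v i) → 0 ≤ ∑ i, c i * v i := by
    intro v hv
    set W : ℝ := ∑ i, c i * (x₀ i - y i) with hW
    have hkey : ∀ ε : ℝ, 0 < ε → 0 ≤ (∑ i, c i * v i) + ε * W := by
      intro ε hε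
      have hstep := hco (fun i => v i + ε * (x₀ i - y i)) ?_
      · rw [Finset.sum_congr rfl (fun i _ => show
          c i * (v i + ε * (x₀ i - y i)) = c i * v i + ε * (c i * (x₀ i - y i)) from by ring)] at hstep
        rw [Finset.sum_add_distrib, ← Finset.mul_sum] at hstep
        exact hstep
      · intro j hj
        have h1 : 0 ≤ ∑ i, a j i * v i := by
          have h1' := hv j
          simpa [ha'def, hj] using h1'
        have h2 : 0 < ∑ i, a j i * (x₀ i - y i) := hstrict j hj
        rw [Finset.sum_congr rfl (fun i _ => show
          a j i * (v i + ε * (x₀ i - y i)) = a j i * v i + ε * (a j i * (x₀ i - y i)) from by ring)]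
        rw [Finset.sum_add_distrib, ← Finset.mul_sum]
        exact add_pos_of_nonneg_of_pos h1 (mul_pos hε h2)
    by_contra hS
    push_neg at hS
    rcases le_or_gt W 0 with hWle | hWpos
    · have := hkey 1 one_pos
      nlinarith
    · have h1 := hkey (-(∑ i, c i * v i)/(2*W)) (div_pos (by linarith) (by linarith))
      have h2 : (-(∑ i, c i * v i)/(2*W)) * W = -(∑ i, c i * v i)/2 := by
        field_simp
      rw [h2] at h1
      linarith
  obtain ⟨lam, hlamnn, hlamc⟩ := farkas a' c hdual
  set lam' : Fin m → ℝ := fun j => if eval y (g j) = 0 then lam j else 0 with hlam'def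
  have hlam'nn : ∀ j, 0 ≤ lam' j := fun j => by
    by_cases h : eval y (g j) = 0 <;> simp [hlam'def, h, hlamnn j]
  have hc' : ∀ i, c i = ∑ j, lam' j * a j i := by
    intro i
    have hfi := congrFun hlamc i
    rw [Finset.sum_apply] at hfi
    rw [hfi]
    refine Finset.sum_congr rfl fun j _ => ?_
    by_cases h : eval y (g j) = 0 <;> simp [ha'def, hlam'def, h]
  -- polynomial assembly
  have hpolyf : f = C (eval y f) + ∑ i, C (c i) * (X i - C (y i)) := by
    conv_lhs => rw [deg_le_one_structure f hfdeg]
    rw [h0f]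
    simp only [map_add, map_sum, map_mul, mul_sub]
    rw [Finset.sum_sub_distrib]
    ring
  have hstep1 : (∑ i, C (c i) * (X i - C (y i)) : MvPolynomial (Fin n) ℝ)
      = ∑ j, lam' j • phiY y (gradIP g j) := by
    rw [Finset.sum_congr rfl (fun j _ => congrArg (lam' j • ·) (phiY_gradIP g y j))]
    rw [Finset.sum_congr rfl (fun j _ => Finset.smul_sum)]
    rw [Finset.sum_comm]
    refine Finset.sum_congr rfl fun i _ => ?_
    rw [hc' i, map_sum, Finset.sum_mul]
    refine Finset.sum_congr rfl fun j _ => ?_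
    rw [smul_eq_C_mul, map_mul, mul_assoc]
  have hstep2 : ∀ j, lam' j • phiY y (gradIP g j)
      = lam' j • (phiY y (σ0 j) + phiY y (ψ0 j)
          + (∑ k ∈ Finset.univ.erase j, phiY y (ψ j k * gYp g k))
          + ∑ k, phiY y (σ j k) * g k) := by
    intro j
    by_cases hj : eval y (g j) = 0
    · congr 1
      have hid := congrArg (phiY y) (hident j)
      simp only [map_add, map_sum, map_mul] at hid
      rw [phiY_gYp, hj, map_zero, mul_zero, add_zero] at hid
      rw [hid]
      rw [Finset.sum_congr rfl (fun k _ => by rw [phiY_gXp g y k] :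
        ∀ k ∈ Finset.univ, phiY y (σ j k) * phiY y (gXp g k) = phiY y (σ j k) * g k)]
      rw [Finset.sum_congr rfl (fun k _ => (map_mul (phiY y) (ψ j k) (gYp g k)).symm :
        ∀ k ∈ Finset.univ.erase j, phiY y (ψ j k) * phiY y (gYp g k) = phiY y (ψ j k * gYp g k))]
      ring
    · simp only [hlam'def, if_neg hj, zero_smul]
  set Δ0 : MvPolynomial (Fin n) ℝ := C (eval y f) + ∑ j, lam' j • (phiY y (σ0 j) + phiY y (ψ0 j)
      + ∑ k ∈ Finset.univ.erase j, phiY y (ψ j k * gYp g k)) with hΔ0def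
  set Δ : Fin m → MvPolynomial (Fin n) ℝ := fun k => ∑ j, lam' j • phiY y (σ j k) with hΔdef
  refine ⟨Δ0, Δ, ?_, ?_, ?_, ?_, ?_⟩
  · -- IsSOS Δ0
    refine (IsSOS_C (hfnn y hyK)).add (IsSOS.finsetSum _ _ fun j _ => ?_)
    refine ((((hσ0 j).mapAlg (phiY y)).add ((hψ0 j).mapAlg (phiY y))).add
      (IsSOS.finsetSum _ _ fun k hk => ?_)).smul (hlam'nn j)
    rw [map_mul, phiY_gYp, mul_comm, ← smul_eq_C_mul]
    exact ((hψ j k (Finset.mem_erase.1 hk).1).mapAlg (phiY y)).smul (hgK y hyK k)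
  · -- IsSOS Δ
    intro k
    exact IsSOS.finsetSum _ _ fun j _ => ((hσ j k).mapAlg (phiY y)).smul (hlam'nn j)
  · -- degree of Δ0
    refine (totalDegree_add _ _).trans (max_le (by simp [totalDegree_C]) ?_)
    refine (totalDegree_finset_sum _ _).trans (Finset.sup_le fun j _ => ?_)
    refine (totalDegree_smul_le _ _).trans ?_
    refine (totalDegree_add _ _).trans (max_le ((totalDegree_add _ _).trans (max_le ?_ ?_)) ?_)
    · exact ((phiY_deg y _).trans (hdσ0 j)).trans (hdjd j)
    · exact ((phiY_deg y _).trans (hdψ0 j)).trans (hdjd j)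
    · refine (totalDegree_finset_sum _ _).trans (Finset.sup_le fun k hk => ?_)
      exact ((phiY_deg y _).trans (hdψ j k (Finset.mem_erase.1 hk).1)).trans (hdjd j)
  · -- degree of Δ k * g k
    intro k
    have hre : Δ k * g k = ∑ j, lam' j • phiY y (σ j k * gXp g k) := by
      rw [hΔdef, Finset.sum_mul]
      refine Finset.sum_congr rfl fun j _ => ?_
      rw [map_mul, phiY_gXp, smul_mul_assoc]
    rw [hre]
    refine (totalDegree_finset_sum _ _).trans (Finset.sup_le fun j _ => ?_)
    exact (totalDegree_smul_le _ _).trans (((phiY_deg y _).trans (hdσ j k)).trans (hdjd j))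
  · -- the identity
    rw [hpolyf, hstep1]
    rw [Finset.sum_congr rfl fun j _ => hstep2 j]
    rw [Finset.sum_congr rfl fun j _ => smul_add (lam' j) _ _]
    rw [Finset.sum_add_distrib]
    simp only [hΔ0def, hΔdef]
    rw [← add_assoc]
    congr 1
    rw [Finset.sum_congr rfl fun j (_ : j ∈ Finset.univ) =>
      (Finset.smul_sum : lam' j • ∑ k, phiY y (σ j k) * g k = _)]
    rw [Finset.sum_comm]
    refine Finset.sum_congr rfl fun k _ => ?_
    rw [Finset.sum_mul]
    exact Finset.sum_congr rfl fun j _ => (smul_mul_assoc _ _ _).symm
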